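/- In the ring of formal power series (equivalently, as an identity of polynomial coefficients for each fixed power of x), 1 = (1-x)^{1+b_0} + ∑_{n ≥ 0} f(n) · x^{n+1} · (1-x)^{1+b_{n+1}}; concretely, for every N ≥ 1 the coefficient of x^N in (1-x)^{1+b_0} + ∑_{n=0}^{N-1} f(n) x^{n+1} (1-x)^{1+b_{n+1}} equals 0. -/

import Mathlib

/-- The number of nondecreasing sequences `0 ≤ a 0 ≤ ⋯ ≤ a n` below the barrier `b`. -/
noncomputable def barrierSeqCount (b : ℕ → ℕ) (n : ℕ) : ℕ :=
  Nat.card {a : Fin (n + 1) → ℕ // Monotone a ∧ ∀ i, a i ≤ b i.1}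

/-- Number of such sequences with last value exactly `k`. -/
noncomputable def barrierCnt (b : ℕ → ℕ) (n k : ℕ) : ℕ :=
  Nat.card {a : Fin (n + 1) → ℕ //
    Monotone a ∧ (∀ i, a i ≤ b i.1) ∧ a (Fin.last n) = k}

private lemma nat_card_sigma {ι : Type*} [Fintype ι] {β : ι → Type*} [∀ i, Finite (β i)] :
    Nat.card (Σ i, β i) = ∑ i, Nat.card (β i) := by
  have := fun i => Fintype.ofFinite (β i)
  simp [Nat.card_eq_fintype_card, Fintype.card_sigma]

private lemma finite_aux (b : ℕ → ℕ) (n : ℕ) (P : (Fin (n+1) → ℕ) → Prop) :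
    Finite {a : Fin (n + 1) → ℕ // P a ∧ ∀ i, a i ≤ b i.1} := by
  have h : {a : Fin (n + 1) → ℕ | P a ∧ ∀ i, a i ≤ b i.1}.Finite := by
    apply Set.Finite.subset (Set.Finite.pi (t := fun i : Fin (n+1) => Set.Iic (b i.1))
      (fun i => Set.finite_Iic _))
    intro a ha
    exact fun i _ => ha.2 i
  exact h

instance barrierFinite1 (b : ℕ → ℕ) (n : ℕ) :
    Finite {a : Fin (n + 1) → ℕ // Monotone a ∧ ∀ i, a i ≤ b i.1} :=
  finite_aux b n Monotone

instance barrierFinite2 (b : ℕ → ℕ) (n k : ℕ) :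
    Finite {a : Fin (n + 1) → ℕ //
      Monotone a ∧ (∀ i, a i ≤ b i.1) ∧ a (Fin.last n) = k} := by
  have h := finite_aux b n (fun a => Monotone a ∧ a (Fin.last n) = k)
  exact Finite.of_equiv _ (Equiv.subtypeEquivRight
    (p := fun a => (Monotone a ∧ a (Fin.last n) = k) ∧ ∀ i, a i ≤ b i.1)
    (q := fun a => Monotone a ∧ (∀ i, a i ≤ b i.1) ∧ a (Fin.last n) = k)
    (fun a => by tauto))

private lemma card_eq_sum_fibers {α : Type*} [Finite α] {m : ℕ} (f : α → Fin m) :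
    Nat.card α = ∑ j : Fin m, Nat.card {x // f x = j} :=
  (Nat.card_congr (Equiv.sigmaFiberEquiv f)).symm.trans nat_card_sigma

/-- (A) total count is sum over last value. -/
lemma barrierSeqCount_eq_sum (b : ℕ → ℕ) (n : ℕ) :
    barrierSeqCount b n = ∑ k ∈ Finset.range (b n + 1), barrierCnt b n k := by
  rw [barrierSeqCount, card_eq_sum_fibers
    (fun a : {a : Fin (n + 1) → ℕ // Monotone a ∧ ∀ i, a i ≤ b i.1} =>
      (⟨a.1 (Fin.last n), Nat.lt_succ_of_le (a.2.2 (Fin.last n))⟩ : Fin (b n + 1))),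
    Finset.sum_range fun k => barrierCnt b n k]
  refine Finset.sum_congr rfl fun j _ => ?_
  refine Nat.card_congr ?_
  exact { toFun := fun x => ⟨x.1.1, x.1.2.1, x.1.2.2, congrArg Fin.val x.2⟩
          invFun := fun a => ⟨⟨a.1, a.2.1, a.2.2.1⟩, Fin.ext a.2.2.2⟩
          left_inv := fun x => rfl
          right_inv := fun a => rfl }

/-- (B) base case. -/
lemma barrierCnt_zero (b : ℕ → ℕ) (k : ℕ) :
    barrierCnt b 0 k = if k ≤ b 0 then 1 else 0 := by
  rw [barrierCnt]
  split_ifs with h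
  · rw [Nat.card_eq_one_iff_unique]
    constructor
    · constructor
      rintro ⟨a, ha1, ha2, ha3⟩ ⟨a', ha1', ha2', ha3'⟩
      ext i
      have hi : i = Fin.last 0 := Fin.ext (by omega)
      subst hi
      show a (Fin.last 0) = a' (Fin.last 0)
      rw [ha3, ha3']
    · refine ⟨⟨fun _ => k, monotone_const, fun i => ?_, rfl⟩⟩
      have hi : i = Fin.last 0 := Fin.ext (by omega)
      subst hi
      exact h
  · have : IsEmpty {a : Fin (0 + 1) → ℕ //
        Monotone a ∧ (∀ i, a i ≤ b i.1) ∧ a (Fin.last 0) = k} := by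
      constructor
      rintro ⟨a, ha1, ha2, ha3⟩
      exact h (ha3 ▸ ha2 (Fin.last 0))
    exact Nat.card_of_isEmpty

/-- (C) recursion. -/
lemma barrierCnt_succ (b : ℕ → ℕ) (n k : ℕ) :
    barrierCnt b (n + 1) k =
      if k ≤ b (n + 1) then ∑ j ∈ Finset.range (k + 1), barrierCnt b n j else 0 := by
  split_ifs with hk
  · rw [barrierCnt, card_eq_sum_fibers
      (fun a : {a : Fin (n + 2) → ℕ //
          Monotone a ∧ (∀ i, a i ≤ b i.1) ∧ a (Fin.last (n + 1)) = k} =>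
        (⟨a.1 (Fin.castSucc (Fin.last n)),
          Nat.lt_succ_of_le (le_trans (a.2.1 (Fin.le_last _)) (le_of_eq a.2.2.2))⟩ : Fin (k + 1))),
      Finset.sum_range fun j => barrierCnt b n j]
    refine Finset.sum_congr rfl fun j _ => ?_
    refine Nat.card_congr ?_
    refine
      { toFun := fun x => ⟨Fin.init x.1.1,
          fun i i' hii' => x.1.2.1 (Fin.castSucc_le_castSucc_iff.mpr hii'),
          fun i => x.1.2.2.1 (Fin.castSucc i),
          congrArg Fin.val x.2⟩
        invFun := fun a => ⟨⟨Fin.snoc a.1 k, ?_, ?_, Fin.snoc_last _ _⟩,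
          Fin.ext (show (Fin.snoc a.1 k : Fin (n+2) → ℕ) (Fin.castSucc (Fin.last n)) = j.1
            by rw [Fin.snoc_castSucc]; exact a.2.2.2)⟩
        left_inv := fun x => ?_
        right_inv := fun a => ?_ }
    · -- Monotone (snoc a.1 k)
      rw [Fin.monotone_iff_le_succ]
      intro i
      refine Fin.lastCases ?_ ?_ i
      · rw [Fin.succ_last, Fin.snoc_castSucc, Fin.snoc_last]
        rw [a.2.2.2]
        exact Nat.lt_succ_iff.mp j.2
      · intro i
        rw [Fin.succ_castSucc, Fin.snoc_castSucc, Fin.snoc_castSucc]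
        exact a.2.1 (Fin.castSucc_le_succ i)
    · -- bound
      intro i
      refine Fin.lastCases ?_ ?_ i
      · rw [Fin.snoc_last]; exact hk
      · intro i
        rw [Fin.snoc_castSucc]
        exact a.2.2.1 i
    · -- left_inv
      apply Subtype.ext
      apply Subtype.ext
      show Fin.snoc (Fin.init x.1.1) k = x.1.1
      have h := Fin.snoc_init_self x.1.1
      rwa [x.1.2.2.2] at h
    · -- right_inv
      apply Subtype.ext
      funext i
      show (Fin.snoc a.1 k : Fin (n + 2) → ℕ) (Fin.castSucc i) = a.1 i
      rw [Fin.snoc_castSucc]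
  · have : IsEmpty {a : Fin (n + 2) → ℕ //
        Monotone a ∧ (∀ i, a i ≤ b i.1) ∧ a (Fin.last (n + 1)) = k} := by
      constructor
      rintro ⟨a, ha1, ha2, ha3⟩
      exact hk (ha3 ▸ ha2 (Fin.last (n + 1)))
    rw [barrierCnt]; exact Nat.card_of_isEmpty

open Polynomial

private lemma geom_aux (m : ℕ) :
    X * ∑ i ∈ Finset.range m, (1 - X : Polynomial ℤ) ^ i = 1 - (1 - X) ^ m := by
  have h := geom_sum_mul ((1 : Polynomial ℤ) - X) m
  linear_combination -h

private lemma barrierCnt_eq_zero (b : ℕ → ℕ) (n k : ℕ) (h : b n < k) :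
    barrierCnt b n k = 0 := by
  have : IsEmpty {a : Fin (n + 1) → ℕ //
      Monotone a ∧ (∀ i, a i ≤ b i.1) ∧ a (Fin.last n) = k} := by
    constructor
    rintro ⟨a, ha1, ha2, ha3⟩
    have h2 := ha2 (Fin.last n)
    rw [Fin.val_last] at h2
    omega
  rw [barrierCnt]
  exact Nat.card_of_isEmpty

private lemma key (b : ℕ → ℕ) (hb : Monotone b) (N : ℕ) :
    ((1 - X) ^ (1 + b 0) +
        ∑ n ∈ Finset.range N,
          (barrierSeqCount b n : ℤ) • (X ^ (n + 1) * (1 - X) ^ (1 + b (n + 1))) :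
      Polynomial ℤ)
      = 1 - X ^ (N + 1) *
          ∑ k ∈ Finset.range (b N + 1), (barrierCnt b N k : Polynomial ℤ) * (1 - X) ^ k := by
  induction N with
  | zero =>
    simp only [Finset.range_zero, Finset.sum_empty, add_zero, zero_add, pow_one]
    have h1 : ∀ k ∈ Finset.range (b 0 + 1),
        (barrierCnt b 0 k : Polynomial ℤ) * (1 - X) ^ k = (1 - X) ^ k := by
      intro k hk
      rw [barrierCnt_zero, if_pos (Nat.lt_succ_iff.mp (Finset.mem_range.mp hk))]
      simp
    rw [Finset.sum_congr rfl h1, geom_aux, add_comm 1 (b 0)]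
    ring
  | succ N ih =>
    rw [Finset.sum_range_succ, ← add_assoc, ih]
    set M := b (N + 1) with hM
    have hMle : b N ≤ M := hb (Nat.le_succ N)
    have hfN : ((barrierSeqCount b N : ℤ) : Polynomial ℤ)
        = ∑ k ∈ Finset.range (b N + 1), (barrierCnt b N k : Polynomial ℤ) := by
      rw [barrierSeqCount_eq_sum]
      push_cast
      ring
    have hIco : ∀ k, k ≤ M + 1 →
        X * ∑ m ∈ Finset.Ico k (M + 1), (1 - X : Polynomial ℤ) ^ m
          = (1 - X) ^ k - (1 - X) ^ (M + 1) := by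
      intro k hk
      rw [Finset.sum_Ico_eq_sub _ hk, mul_sub, geom_aux, geom_aux]
      ring
    have hIcoFilter : ∀ k, Finset.Ico k (M + 1) =
        (Finset.range (M + 1)).filter (fun m => k ≤ m) := by
      intro k
      ext m
      simp only [Finset.mem_Ico, Finset.mem_filter, Finset.mem_range]
      omega
    have hcast : ∀ m, m ≤ M → (barrierCnt b (N + 1) m : Polynomial ℤ)
        = ∑ j ∈ Finset.range (m + 1), (barrierCnt b N j : Polynomial ℤ) := by
      intro m hm
      rw [barrierCnt_succ, if_pos hm]
      push_cast
      ring
    have main : (∑ k ∈ Finset.range (b N + 1), (barrierCnt b N k : Polynomial ℤ) * (1 - X) ^ k)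
        - (∑ k ∈ Finset.range (b N + 1), (barrierCnt b N k : Polynomial ℤ)) * (1 - X) ^ (1 + M)
        = X * ∑ m ∈ Finset.range (M + 1),
            (barrierCnt b (N + 1) m : Polynomial ℤ) * (1 - X) ^ m := by
      have e1 : (∑ k ∈ Finset.range (b N + 1), (barrierCnt b N k : Polynomial ℤ) * (1 - X) ^ k)
          - (∑ k ∈ Finset.range (b N + 1), (barrierCnt b N k : Polynomial ℤ)) * (1 - X) ^ (1 + M)
          = ∑ k ∈ Finset.range (b N + 1), (barrierCnt b N k : Polynomial ℤ) *
              ((1 - X) ^ k - (1 - X) ^ (M + 1)) := by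
        rw [Finset.sum_mul, ← Finset.sum_sub_distrib]
        refine Finset.sum_congr rfl fun k hk => ?_
        rw [add_comm 1 M]
        ring
      have e2 : ∀ k ∈ Finset.range (b N + 1),
          (barrierCnt b N k : Polynomial ℤ) * ((1 - X) ^ k - (1 - X) ^ (M + 1))
            = X * ∑ m ∈ Finset.Ico k (M + 1), (barrierCnt b N k : Polynomial ℤ) * (1 - X) ^ m := by
        intro k hk
        have hk' : k ≤ M + 1 := by
          have := Finset.mem_range.mp hk
          omega
        rw [← hIco k hk', Finset.mul_sum, Finset.mul_sum, Finset.mul_sum]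
        refine Finset.sum_congr rfl fun m _ => ?_
        ring
      rw [e1, Finset.sum_congr rfl e2, ← Finset.mul_sum]
      congr 1
      -- swap the double sum
      have hext : ∑ k ∈ Finset.range (b N + 1),
            ∑ m ∈ Finset.Ico k (M + 1), (barrierCnt b N k : Polynomial ℤ) * (1 - X) ^ m
          = ∑ k ∈ Finset.range (M + 1),
            ∑ m ∈ Finset.Ico k (M + 1), (barrierCnt b N k : Polynomial ℤ) * (1 - X) ^ m := by
        refine Finset.sum_subset (Finset.range_subset_range.mpr (by omega)) ?_
        intro k hk hk'
        have hbk : b N < k := by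
          simp only [Finset.mem_range, not_lt] at hk'
          omega
        rw [barrierCnt_eq_zero b N k hbk]
        simp
      rw [hext]
      simp only [hIcoFilter, Finset.sum_filter]
      rw [Finset.sum_comm]
      refine Finset.sum_congr rfl fun m hm => ?_
      have hm' : m ≤ M := Nat.lt_succ_iff.mp (Finset.mem_range.mp hm)
      rw [hcast m hm', ← Finset.sum_filter]
      have hfil : (Finset.range (M + 1)).filter (fun k => k ≤ m) = Finset.range (m + 1) := by
        ext k
        simp only [Finset.mem_filter, Finset.mem_range]
        omega
      rw [hfil, Finset.sum_mul]
    rw [zsmul_eq_mul]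
    push_cast
    push_cast at hfN
    linear_combination (-(X ^ (N + 1) : Polynomial ℤ)) * main
      + (X ^ (N + 1) * (1 - X) ^ (1 + M)) * hfN

open Polynomial in
theorem stmt_4 (b : ℕ → ℕ) (hb : Monotone b) (N : ℕ) (hN : 1 ≤ N) :
    ((1 - X) ^ (1 + b 0) +
        ∑ n ∈ Finset.range N,
          (barrierSeqCount b n : ℤ) • (X ^ (n + 1) * (1 - X) ^ (1 + b (n + 1))) :
      Polynomial ℤ).coeff N = 0 := by
  rw [key b hb N, Polynomial.coeff_sub, Polynomial.coeff_one,
    mul_comm, Polynomial.coeff_mul_X_pow']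
  rw [if_neg (by omega : ¬N = 0), if_neg (by omega : ¬N + 1 ≤ N)]
  ring
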